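/- Let Λ₁, Λ₂, γ_{r,1}, γ_{r,2}, γ_s be nonnegative reals with Λ := Λ₁ + Λ₂ > 0 and set γ_r := γ_{r,1} + γ_{r,2}. Consider the disease-free equilibrium equations for the two-susceptible-class SIR-PH-FA model with the infectious compartments set to zero: Λ_i + γ_{r,i}·r − s_i·(Λ + γ_s) = 0 for i = 1,2, and (s₁ + s₂)·γ_s − (γ_r + Λ)·r = 0. Then this system has a unique solution (s₁, s₂, r), given by r = γ_s/(Λ + γ_r + γ_s) and s_i = (Λ_i + γ_{r,i}·r)/(Λ + γ_s) for i = 1,2. -/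

import Mathlib

/-- Unique disease-free equilibrium of the two-susceptible-class SIR-PH-FA model:
with `Λ = Λ₁ + Λ₂ > 0` and `γ_r = γ_{r,1} + γ_{r,2}`, the system
`Λ_i + γ_{r,i}·r − s_i·(Λ + γ_s) = 0` (i = 1,2) and
`(s₁ + s₂)·γ_s − (γ_r + Λ)·r = 0` has the unique solution
`r = γ_s/(Λ + γ_r + γ_s)`, `s_i = (Λ_i + γ_{r,i}·r)/(Λ + γ_s)`. -/
theorem stmt9 (Λ₁ Λ₂ γr₁ γr₂ γs : ℝ)
    (hΛ₁ : 0 ≤ Λ₁) (hΛ₂ : 0 ≤ Λ₂) (hγr₁ : 0 ≤ γr₁) (hγr₂ : 0 ≤ γr₂)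
    (hγs : 0 ≤ γs) (hΛ : 0 < Λ₁ + Λ₂) :
    ∀ s₁ s₂ r : ℝ,
      (Λ₁ + γr₁ * r - s₁ * ((Λ₁ + Λ₂) + γs) = 0 ∧
       Λ₂ + γr₂ * r - s₂ * ((Λ₁ + Λ₂) + γs) = 0 ∧
       (s₁ + s₂) * γs - ((γr₁ + γr₂) + (Λ₁ + Λ₂)) * r = 0) ↔
      (r = γs / ((Λ₁ + Λ₂) + (γr₁ + γr₂) + γs) ∧
       s₁ = (Λ₁ + γr₁ * r) / ((Λ₁ + Λ₂) + γs) ∧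
       s₂ = (Λ₂ + γr₂ * r) / ((Λ₁ + Λ₂) + γs)) := by
  intro s₁ s₂ r
  have hd1 : (Λ₁ + Λ₂) + γs ≠ 0 := by positivity
  have hd2 : (Λ₁ + Λ₂) + (γr₁ + γr₂) + γs ≠ 0 := by positivity
  constructor
  · rintro ⟨h1, h2, h3⟩
    have hr : r = γs / ((Λ₁ + Λ₂) + (γr₁ + γr₂) + γs) := by
      field_simp
      nlinarith [h1, h2, h3, mul_pos hΛ (show (0:ℝ) < (Λ₁+Λ₂)+(γr₁+γr₂)+γs by positivity)]
    refine ⟨hr, ?_, ?_⟩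
    · field_simp; linarith [h1]
    · field_simp; linarith [h2]
  · rintro ⟨hr, hs₁, hs₂⟩
    subst hs₁ hs₂
    refine ⟨by field_simp; ring, by field_simp; ring, ?_⟩
    rw [hr]
    field_simp
    ring
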